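/- arXiv:1705.02746 — 3 statements merged into one kernel-verified Lean document; each statement's English description precedes it below -/
import Mathlib

section
/- Suppose a class X̄ ⊆ L²(ℝ) of real-valued functions is L²(ℝ)-predictable in the weak sense. Then for every s ∈ ℝ, every x ∈ X̄ is uniquely defined by its restriction to (−∞, s]: if x, x′ ∈ X̄ satisfy x(t) = x′(t) for almost every t ≤ s, then x = x′ almost everywhere on ℝ. -/
open MeasureTheory Filter Complex
open scoped ENNReal NNReal

noncomputable section

/-- The Fourier transform `(ℱx)(iω) = ∫ e^{-iωt} x(t) dt`. -/
def FT (x : ℝ → ℂ) (ω : ℝ) : ℂ :=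
  ∫ t : ℝ, Complex.exp (-(Complex.I * ω * t)) * x t

/-- The inverse Fourier transform. -/
def invFT (X : ℝ → ℂ) (t : ℝ) : ℂ :=
  (1 / (2 * Real.pi) : ℝ) • ∫ ω : ℝ, Complex.exp (Complex.I * ω * t) * X ω

/-- The Laplace transform of a function (supported on `[0,∞)`). -/
def Laplace (f : ℝ → ℝ) (z : ℂ) : ℂ :=
  ∫ t in Set.Ioi (0:ℝ), Complex.exp (-(z * t)) * f t

/-- The class `𝒦`. -/
def IsKclass (κ : ℝ → ℝ) : Prop :=
  (∀ t > (0:ℝ), κ t = 0) ∧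
  MeasureTheory.Integrable (fun t => (κ t : ℂ)) ∧
  ∃ m : ℕ, 0 < m ∧ ∃ (a : Fin m → ℝ) (d : Polynomial ℂ),
    (∀ j, 0 < a j) ∧ d.degree < (m : WithBot ℕ) ∧
    ∀ ω : ℝ, FT (fun t => (κ t : ℂ)) ω
      = Polynomial.eval (Complex.I * ω) d / ∏ j, (Complex.I * ω - (a j : ℂ))

/-- The class `𝒦̂`: causal kernels with Laplace transform in `H² ∩ H^∞`. -/
def IsKhatClass (κh : ℝ → ℝ) : Prop :=
  (∀ t < (0:ℝ), κh t = 0) ∧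
  MemLp (fun t => (κh t : ℂ)) 2 (volume : Measure ℝ) ∧
  DifferentiableOn ℂ (Laplace κh) {z : ℂ | 0 < z.re} ∧
  (∃ M : ℝ, ∀ z : ℂ, 0 < z.re → ‖Laplace κh z‖ ≤ M) ∧
  (∃ C : ℝ, ∀ s : ℝ, 0 < s → (∫ ω : ℝ, ‖Laplace κh (s + Complex.I * ω)‖ ^ 2) ≤ C)

/-- Anticausal convolution `(κ∘x)(t) = ∫_t^∞ κ(t-s) x(s) ds`. -/
def aconv (κ : ℝ → ℝ) (x : ℝ → ℂ) (t : ℝ) : ℂ :=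
  ∫ s in Set.Ioi t, (κ (t - s) : ℂ) * x s

/-- Causal convolution `(κ̂∘x)(t) = ∫_{-∞}^t κ̂(t-s) x(s) ds`. -/
def cconv (κh : ℝ → ℝ) (x : ℝ → ℂ) (t : ℝ) : ℂ :=
  ∫ s in Set.Iic t, (κh (t - s) : ℂ) * x s

/-- Causal convolution with a complex-valued kernel. -/
def cconvC (κh : ℝ → ℂ) (x : ℝ → ℂ) (t : ℝ) : ℂ :=
  ∫ s in Set.Iic t, κh (t - s) * x s

/-- The weight `h(ω,q,c) = exp (c / |ω|^q)`. -/
def hw (q c ω : ℝ) : ℝ := Real.exp (c / |ω| ^ q)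

/-- The norm of `𝒳(q,c)`: `esssup |(ℱx)(iω)| h(ω,q,c)`. -/
def Xnorm (q c : ℝ) (x : ℝ → ℂ) : ℝ≥0∞ :=
  eLpNorm (fun ω : ℝ => hw q c ω • FT x ω) ⊤ (volume : Measure ℝ)

/-- Membership in the class `𝒳(q,c)`. -/
def memX (q c : ℝ) (x : ℝ → ℂ) : Prop :=
  MemLp x 2 (volume : Measure ℝ) ∧ Xnorm q c x < ⊤

/-- The function `V_j`-factor: `1 - exp(-γ (z-a)/(z+γ^{-r}))`. -/
def Vone (r γ a : ℝ) (z : ℂ) : ℂ :=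
  1 - Complex.exp (-((γ : ℂ) * (z - (a : ℂ)) / (z + ((γ ^ (-r) : ℝ) : ℂ))))

/-- The function `V(z) = ∏_j V_j(z)`. -/
def Vfun (m : ℕ) (a : Fin m → ℝ) (r γ : ℝ) (z : ℂ) : ℂ :=
  ∏ j : Fin m, Vone r γ (a j) z


/-- Two-sided convolution `(f∘x)(t) = ∫_ℝ f(t-s) x(s) ds` (real-valued). -/
def convR (f x : ℝ → ℝ) (t : ℝ) : ℝ := ∫ s : ℝ, f (t - s) * x s

/-- A class of real-valued processes is `L²(ℝ)`-predictable in the weak sense. -/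
def WeakPredictableR (Xb : Set (ℝ → ℝ)) : Prop :=
  ∀ κ : ℝ → ℝ, IsKclass κ →
    ∃ κh : ℕ → ℝ → ℝ, (∀ j, IsKhatClass (κh j)) ∧
      ∀ x ∈ Xb, Tendsto
        (fun j : ℕ => eLpNorm (fun t : ℝ => convR κ x t - convR (κh j) x t) 2 (volume : Measure ℝ))
        atTop (nhds 0)

section Helpers

/-! ### Auxiliary lemmas -/

private lemma expIic {a : ℝ} (ha : 0 < a) :
    IntegrableOn (fun t : ℝ => Real.exp (a * t)) (Set.Iic (0:ℝ)) (volume : Measure ℝ) := by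
  have h0 : IntegrableOn (fun t : ℝ => Real.exp (-a * t)) (Set.Ici (0:ℝ)) volume :=
    Iff.mpr integrableOn_Ici_iff_integrableOn_Ioi (exp_neg_integrableOn_Ioi 0 ha)
  have h1 := (MeasurePreserving.integrableOn_comp_preimage
      (Measure.measurePreserving_neg (volume : Measure ℝ))
      (Homeomorph.neg ℝ).measurableEmbedding).2 h0
  have h2 : ((fun t : ℝ => Real.exp (-a * t)) ∘ Neg.neg) = fun t : ℝ => Real.exp (a * t) := by
    funext t; simp only [Function.comp_apply]; congr 1; ring
  have h3 : ((Neg.neg : ℝ → ℝ) ⁻¹' Set.Ici (0:ℝ) : Set ℝ) = Set.Iic 0 := by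
    ext t; simp
  rwa [h2, h3] at h1

private lemma memL2_exp {c : ℝ} (hc : 0 < c) (s : ℝ) :
    MemLp (fun t : ℝ => Real.exp (-(c * t))) 2 (volume.restrict (Set.Ioi s)) := by
  have hcont : Continuous fun t : ℝ => Real.exp (-(c * t)) :=
    Real.continuous_exp.comp (continuous_const.mul continuous_id).neg
  refine (memLp_two_iff_integrable_sq hcont.aestronglyMeasurable).2 ?_
  have h : (fun t : ℝ => (Real.exp (-(c * t))) ^ 2) = fun t : ℝ => Real.exp (-(2*c) * t) := by
    funext t; rw [sq, ← Real.exp_add]; congr 1; ring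
  rw [h]; exact exp_neg_integrableOn_Ioi s (by linarith)

private lemma half_add_half : (1 : ℝ≥0∞) / 1 = 1 / 2 + 1 / 2 := by
  rw [ENNReal.div_add_div_same, one_div_one, one_add_one_eq_two]
  exact (ENNReal.div_self two_ne_zero ENNReal.ofNat_ne_top).symm

private lemma integrableOn_exp_mul_L2 {y : ℝ → ℝ} (hy : MemLp y 2 (volume : Measure ℝ))
    {c : ℝ} (hc : 0 < c) (s : ℝ) :
    IntegrableOn (fun t : ℝ => Real.exp (-(c * t)) * y t) (Set.Ioi s) (volume : Measure ℝ) := by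
  have h : MemLp ((fun t : ℝ => Real.exp (-(c * t))) • y) 1 (volume.restrict (Set.Ioi s)) :=
    (hy.restrict (Set.Ioi s)).smul (memL2_exp hc s) (hpqr := ⟨by simp only [← one_div]; exact half_add_half.symm⟩)
  have h1 := memLp_one_iff_integrable.mp h
  simpa [Pi.smul_apply', Pi.smul_apply, smul_eq_mul, Pi.mul_def, IntegrableOn] using h1

private lemma convR_congr_fun {f : ℝ → ℝ} {x x' : ℝ → ℝ} (h : x =ᵐ[(volume : Measure ℝ)] x')
    (t : ℝ) : convR f x t = convR f x' t := by
  refine integral_congr_ae ?_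
  filter_upwards [h] with u hu
  rw [hu]

private lemma measurePreserving_const_sub (t : ℝ) :
    MeasurePreserving (fun u : ℝ => t - u) (volume : Measure ℝ) volume := by
  have h1 : MeasurePreserving (fun u : ℝ => -u) (volume : Measure ℝ) volume :=
    Measure.measurePreserving_neg _
  have h2 : MeasurePreserving (fun u : ℝ => t + u) (volume : Measure ℝ) volume :=
    measurePreserving_add_left volume t
  have h3 := h2.comp h1
  have : ((fun u : ℝ => t + u) ∘ fun u : ℝ => -u) = fun u : ℝ => t - u := by
    funext u; simp [sub_eq_add_neg]
  rwa [this] at h3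

private lemma convR_congr_ker {f f' : ℝ → ℝ} (h : f =ᵐ[(volume : Measure ℝ)] f')
    (x : ℝ → ℝ) (t : ℝ) : convR f x t = convR f' x t := by
  refine integral_congr_ae ?_
  have h3 : (fun u : ℝ => f (t - u)) =ᵐ[(volume : Measure ℝ)] fun u => f' (t - u) :=
    (measurePreserving_const_sub t).quasiMeasurePreserving.ae_eq_comp h
  filter_upwards [h3] with u hu
  rw [hu]

private lemma convR_stronglyMeasurable {f x : ℝ → ℝ} (hf : Measurable f) (hx : Measurable x) :
    StronglyMeasurable (convR f x) := by
  have hF : StronglyMeasurable fun p : ℝ × ℝ => f (p.1 - p.2) * x p.2 :=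
    ((hf.comp (measurable_fst.sub measurable_snd)).mul (hx.comp measurable_snd)).stronglyMeasurable
  exact hF.integral_prod_right'

private def expKer (a : ℝ) : ℝ → ℝ := fun t => if t ≤ 0 then Real.exp (a * t) else 0

private lemma expKer_meas (a : ℝ) : Measurable (expKer a) := by
  unfold expKer
  exact Measurable.ite measurableSet_Iic
    (Real.continuous_exp.comp (continuous_const.mul continuous_id)).measurable measurable_const

private lemma expKer_indicator (a : ℝ) :
    expKer a = Set.indicator (Set.Iic (0:ℝ)) (fun t => Real.exp (a * t)) := by
  funext t
  simp [expKer, Set.indicator_apply, Set.mem_Iic]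

private lemma expKer_integrable {a : ℝ} (ha : 0 < a) :
    Integrable (expKer a) (volume : Measure ℝ) := by
  rw [expKer_indicator]
  exact (integrable_indicator_iff measurableSet_Iic).2 (expIic ha)

private lemma expKer_FT {a : ℝ} (ha : 0 < a) (ω : ℝ) :
    FT (fun t => ((expKer a t : ℝ) : ℂ)) ω = 1 / ((a : ℂ) - Complex.I * ω) := by
  set c : ℂ := (a : ℂ) - Complex.I * ω with hc
  have hcre : c.re = a := by simp [hc]
  have hc0 : c ≠ 0 := by
    intro h; rw [h] at hcre; simp at hcre; rw [← hcre] at ha; exact lt_irrefl 0 ha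
  have hre : ∀ t : ℝ, (c * (t:ℂ)).re = a * t := by
    intro t; simp [Complex.mul_re, hcre]
  have h1 : (fun t : ℝ => Complex.exp (-(Complex.I * ω * t)) * ((expKer a t : ℝ) : ℂ))
      = Set.indicator (Set.Iic (0:ℝ)) (fun t : ℝ => Complex.exp (c * t)) := by
    funext t
    by_cases h : t ≤ 0
    · rw [Set.indicator_of_mem (Set.mem_Iic.mpr h)]
      simp only [expKer, if_pos h]
      rw [Complex.ofReal_exp, ← Complex.exp_add]
      congr 1
      push_cast
      ring
    · rw [Set.indicator_of_notMem (by simpa using h)]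
      simp [expKer, h]
  have hderiv : ∀ t ∈ Set.Iic (0:ℝ), HasDerivAt (fun t : ℝ => Complex.exp (c * t) / c)
      (Complex.exp (c * t)) t := by
    intro t _
    have h3 : HasDerivAt (fun z : ℂ => c * z) c (t : ℂ) := by
      simpa using (hasDerivAt_id (t : ℂ)).const_mul c
    have h4 := ((Complex.hasDerivAt_exp (c * (t:ℂ))).comp (t:ℂ) h3).div_const c
    rw [mul_div_cancel_right₀ _ hc0] at h4
    exact h4.comp_ofReal
  have hint : IntegrableOn (fun t : ℝ => Complex.exp (c * t)) (Set.Iic (0:ℝ)) volume := by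
    refine Integrable.mono' (expIic ha)
      ((Complex.continuous_exp.comp
        (continuous_const.mul Complex.continuous_ofReal)).aestronglyMeasurable) ?_
    refine Filter.Eventually.of_forall fun t => ?_
    rw [Complex.norm_exp, hre t]
  have htend : Tendsto (fun t : ℝ => Complex.exp (c * t) / c) atBot (nhds 0) := by
    rw [tendsto_zero_iff_norm_tendsto_zero]
    have heq : (fun t : ℝ => ‖Complex.exp (c * t) / c‖) = fun t => Real.exp (a * t) / ‖c‖ := by
      funext t; rw [norm_div, Complex.norm_exp, hre t]
    rw [heq]
    have h5 := (Real.tendsto_exp_atBot.comp (tendsto_id.const_mul_atBot ha)).div_const ‖c‖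
    simpa [Function.comp] using h5
  have hmain := integral_Iic_of_hasDerivAt_of_tendsto' hderiv hint htend
  unfold FT
  rw [h1, integral_indicator measurableSet_Iic, hmain]
  simp

private lemma expKer_isKclass {a : ℝ} (ha : 0 < a) : IsKclass (expKer a) := by
  refine ⟨fun t ht => by simp [expKer, not_le.mpr ht], (expKer_integrable ha).ofReal,
    1, one_pos, fun _ => a, Polynomial.C (-1), fun _ => ha, ?_, fun ω => ?_⟩
  · rw [Polynomial.degree_C (by norm_num : (-1:ℂ) ≠ 0)]
    exact_mod_cast zero_lt_one
  · rw [expKer_FT ha ω, Polynomial.eval_C, Fin.prod_univ_one]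
    have hrw : Complex.I * (ω:ℂ) - ((a:ℝ):ℂ) = -(((a:ℝ):ℂ) - Complex.I * ω) := by ring
    rw [hrw, div_neg, neg_div, neg_neg]

private lemma convR_expKer (a : ℝ) (z : ℝ → ℝ) (t : ℝ) :
    convR (expKer a) z t = ∫ u in Set.Ici t, Real.exp (a * (t - u)) * z u := by
  unfold convR
  rw [← integral_indicator measurableSet_Ici]
  congr 1
  funext u
  by_cases h : t ≤ u
  · rw [Set.indicator_of_mem (Set.mem_Ici.mpr h)]
    simp [expKer, sub_nonpos.mpr h]
  · rw [Set.indicator_of_notMem (by simpa using h)]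
    have h2 : ¬ (t - u ≤ 0) := by
      rw [sub_nonpos]; exact h
    simp [expKer, h2]

private lemma integrableOn_kernel {z : ℝ → ℝ} (hz : MemLp z 2 (volume : Measure ℝ))
    {a : ℝ} (ha : 0 < a) (t : ℝ) :
    IntegrableOn (fun u : ℝ => Real.exp (a * (t - u)) * z u) (Set.Ici t) (volume : Measure ℝ) := by
  rw [integrableOn_Ici_iff_integrableOn_Ioi]
  have h := (integrableOn_exp_mul_L2 hz ha t).const_mul (Real.exp (a * t))
  have heq : (fun u : ℝ => Real.exp (a * t) * (Real.exp (-(a * u)) * z u))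
      = fun u : ℝ => Real.exp (a * (t - u)) * z u := by
    funext u; rw [← mul_assoc, ← Real.exp_add]; congr 2; ring
  rwa [heq] at h

private lemma keyA {Xb : Set (ℝ → ℝ)} (hL2 : ∀ x ∈ Xb, MemLp x 2 (volume : Measure ℝ))
    (hpred : WeakPredictableR Xb) {s : ℝ} {x x' : ℝ → ℝ} (hx : x ∈ Xb) (hx' : x' ∈ Xb)
    (hpast : ∀ᵐ t : ℝ, t ≤ s → x t = x' t) {a : ℝ} (ha : 0 < a) :
    ∫ u in Set.Ioi s, Real.exp (-(a * u)) * (x u - x' u) = 0 := by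
  obtain ⟨κh, hκh, hconv⟩ := hpred (expKer a) (expKer_isKclass ha)
  have hx2 := hL2 x hx
  have hx'2 := hL2 x' hx'
  set x₀ : ℝ → ℝ := hx2.aestronglyMeasurable.mk x with hx₀
  have hx₀m := hx2.aestronglyMeasurable.stronglyMeasurable_mk
  have hx₀e := hx2.aestronglyMeasurable.ae_eq_mk
  set x₀' : ℝ → ℝ := hx'2.aestronglyMeasurable.mk x' with hx₀'
  have hx₀'m := hx'2.aestronglyMeasurable.stronglyMeasurable_mk
  have hx₀'e := hx'2.aestronglyMeasurable.ae_eq_mk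
  set Δ : ℝ → ℝ := fun t => convR (expKer a) x t - convR (expKer a) x' t with hΔ
  have hΔt : ∀ t : ℝ, Δ t = convR (expKer a) x t - convR (expKer a) x' t := fun _ => rfl
  have mΔ : AEStronglyMeasurable Δ (volume : Measure ℝ) := by
    have hΔeq : Δ = fun t => convR (expKer a) x₀ t - convR (expKer a) x₀' t := by
      funext t
      rw [hΔt t, convR_congr_fun hx₀e, convR_congr_fun hx₀'e]
    rw [hΔeq]
    exact ((convR_stronglyMeasurable (expKer_meas a) hx₀m.measurable).sub
      (convR_stronglyMeasurable (expKer_meas a) hx₀'m.measurable)).aestronglyMeasurable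
  have mD : ∀ (j : ℕ) (z : ℝ → ℝ), MemLp z 2 (volume : Measure ℝ) →
      AEStronglyMeasurable (fun t => convR (expKer a) z t - convR (κh j) z t)
        (volume : Measure ℝ) := by
    intro j z hz
    set z₀ : ℝ → ℝ := hz.aestronglyMeasurable.mk z with hz₀
    have hz₀m := hz.aestronglyMeasurable.stronglyMeasurable_mk
    have hz₀e := hz.aestronglyMeasurable.ae_eq_mk
    have hκa : AEMeasurable (κh j) (volume : Measure ℝ) := by
      have h1 := (hκh j).2.1.aestronglyMeasurable.aemeasurable
      have h2 := Complex.measurable_re.comp_aemeasurable h1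
      simpa [Function.comp_def] using h2
    have heq : (fun t => convR (expKer a) z t - convR (κh j) z t)
        = fun t => convR (expKer a) z₀ t - convR (hκa.mk _) z₀ t := by
      funext t
      show convR (expKer a) z t - convR (κh j) z t = _
      rw [convR_congr_fun hz₀e, convR_congr_ker hκa.ae_eq_mk, convR_congr_fun hz₀e]
    rw [heq]
    exact ((convR_stronglyMeasurable (expKer_meas a) hz₀m.measurable).sub
      (convR_stronglyMeasurable hκa.measurable_mk hz₀m.measurable)).aestronglyMeasurable
  have hpp : ∀ (j : ℕ), ∀ t ≤ s, convR (κh j) x t = convR (κh j) x' t := by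
    intro j t ht
    refine integral_congr_ae ?_
    filter_upwards [hpast] with u hu
    by_cases hut : u ≤ t
    · rw [hu (hut.trans ht)]
    · have h2 : t - u < 0 := by
        have := lt_of_not_ge hut; linarith
      rw [(hκh j).1 _ h2]
      ring
  have hIle : ∀ j : ℕ, eLpNorm (Set.indicator (Set.Iic s) Δ) 2 (volume : Measure ℝ)
      ≤ eLpNorm (fun t : ℝ => convR (expKer a) x t - convR (κh j) x t) 2 (volume : Measure ℝ)
        + eLpNorm (fun t : ℝ => convR (expKer a) x' t - convR (κh j) x' t) 2
          (volume : Measure ℝ) := by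
    intro j
    have hind : Set.indicator (Set.Iic s) Δ = Set.indicator (Set.Iic s)
        (fun t => (convR (expKer a) x t - convR (κh j) x t)
          - (convR (expKer a) x' t - convR (κh j) x' t)) := by
      funext t
      by_cases ht : t ∈ Set.Iic s
      · rw [Set.indicator_of_mem ht, Set.indicator_of_mem ht, hΔt t]
        rw [hpp j t ht]
        ring
      · rw [Set.indicator_of_notMem ht, Set.indicator_of_notMem ht]
    rw [hind]
    exact le_trans (eLpNorm_indicator_le _)
      (eLpNorm_sub_le (mD j x hx2) (mD j x' hx'2) one_le_two)
  have hzero : eLpNorm (Set.indicator (Set.Iic s) Δ) 2 (volume : Measure ℝ) = 0 := by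
    refine le_antisymm ?_ zero_le
    have htend := (hconv x hx).add (hconv x' hx')
    rw [add_zero] at htend
    exact le_of_tendsto_of_tendsto' tendsto_const_nhds htend hIle
  have hae : ∀ᵐ t : ℝ, t ≤ s → Δ t = 0 := by
    have h0 := (eLpNorm_eq_zero_iff (mΔ.indicator measurableSet_Iic) (by norm_num)).1 hzero
    filter_upwards [h0] with t ht hts
    rw [← Set.indicator_of_mem (Set.mem_Iic.mpr hts) Δ]
    exact ht
  have hy2 : MemLp (fun u : ℝ => x u - x' u) 2 (volume : Measure ℝ) := hx2.sub hx'2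
  have hval : ∀ t, t ≤ s → Δ t = 0 →
      ∫ u in Set.Ioi s, Real.exp (-(a * u)) * (x u - x' u) = 0 := by
    intro t hts hΔ0
    have h1 : Δ t = ∫ u in Set.Ici t,
        (Real.exp (a * (t - u)) * x u - Real.exp (a * (t - u)) * x' u) := by
      rw [hΔt t, convR_expKer, convR_expKer,
        ← integral_sub (integrableOn_kernel hx2 ha t) (integrableOn_kernel hx'2 ha t)]
    have h2 : ∫ u in Set.Ici t,
        (Real.exp (a * (t - u)) * x u - Real.exp (a * (t - u)) * x' u)
        = Real.exp (a * t) * ∫ u in Set.Ici t, Real.exp (-(a * u)) * (x u - x' u) := by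
      rw [← integral_const_mul]
      refine integral_congr_ae (Filter.Eventually.of_forall fun u => ?_)
      show Real.exp (a * (t - u)) * x u - Real.exp (a * (t - u)) * x' u
          = Real.exp (a * t) * (Real.exp (-(a * u)) * (x u - x' u))
      rw [show Real.exp (a * (t - u)) = Real.exp (a * t) * Real.exp (-(a * u)) from by
        rw [← Real.exp_add]; congr 1; ring]
      ring
    have h3 : ∫ u in Set.Ici t, Real.exp (-(a * u)) * (x u - x' u) = 0 := by
      have h4 : Real.exp (a * t) * ∫ u in Set.Ici t, Real.exp (-(a * u)) * (x u - x' u) = 0 := by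
        rw [← h2, ← h1, hΔ0]
      rcases mul_eq_zero.mp h4 with h5 | h5
      · exact absurd h5 (Real.exp_pos _).ne'
      · exact h5
    rw [integral_Ici_eq_integral_Ioi] at h3
    have hint1 : IntegrableOn (fun u : ℝ => Real.exp (-(a * u)) * (x u - x' u))
        (Set.Ioc t s) (volume : Measure ℝ) :=
      (integrableOn_exp_mul_L2 hy2 ha t).mono_set Set.Ioc_subset_Ioi_self
    have hint2 : IntegrableOn (fun u : ℝ => Real.exp (-(a * u)) * (x u - x' u))
        (Set.Ioi s) (volume : Measure ℝ) := integrableOn_exp_mul_L2 hy2 ha s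
    have hsplit : ∫ u in Set.Ioi t, Real.exp (-(a * u)) * (x u - x' u)
        = (∫ u in Set.Ioc t s, Real.exp (-(a * u)) * (x u - x' u))
          + ∫ u in Set.Ioi s, Real.exp (-(a * u)) * (x u - x' u) := by
      rw [← setIntegral_union (Set.Ioc_disjoint_Ioi le_rfl) measurableSet_Ioi hint1 hint2,
        Set.Ioc_union_Ioi_eq_Ioi hts]
    have hPast0 : ∫ u in Set.Ioc t s, Real.exp (-(a * u)) * (x u - x' u) = 0 := by
      have h6 : ∀ᵐ u ∂((volume : Measure ℝ).restrict (Set.Ioc t s)),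
          Real.exp (-(a * u)) * (x u - x' u) = 0 := by
        filter_upwards [ae_restrict_mem measurableSet_Ioc, ae_restrict_of_ae hpast] with u hu hp
        rw [hp hu.2]
        ring
      exact integral_eq_zero_of_ae h6
    rw [hsplit, hPast0, zero_add] at h3
    exact h3
  haveI hne : Filter.NeBot (ae ((volume : Measure ℝ).restrict (Set.Iic s))) := by
    rw [ae_neBot, Ne, Measure.restrict_eq_zero]
    simp [Real.volume_Iic]
  have hcomb : ∀ᵐ t ∂((volume : Measure ℝ).restrict (Set.Iic s)),
      t ∈ Set.Iic s ∧ (t ≤ s → Δ t = 0) :=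
    (ae_restrict_mem measurableSet_Iic).and (ae_restrict_of_ae hae)
  obtain ⟨t, ht⟩ := hcomb.exists
  exact hval t ht.1 (ht.2 ht.1)

private lemma keyB {y : ℝ → ℝ} (hy : MemLp y 2 (volume : Measure ℝ)) (s : ℝ)
    (hkey : ∀ c : ℝ, 0 < c → ∫ u in Set.Ioi s, Real.exp (-(c * u)) * y u = 0) :
    ∀ᵐ u : ℝ, u ∈ Set.Ioi s → y u = 0 := by
  have hli : LocallyIntegrable (Set.indicator (Set.Ioi s) y) (volume : Measure ℝ) :=
    (hy.locallyIntegrable one_le_two).indicator measurableSet_Ioi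
  have hmain : ∀ (g : ℝ → ℝ), ContDiff ℝ (((⊤ : ℕ∞) : WithTop ℕ∞)) g → HasCompactSupport g →
      ∫ u : ℝ, g u • Set.indicator (Set.Ioi s) y u = 0 := by
    intro g hg hgsupp
    have hgc : Continuous g := hg.continuous
    have h1 : (fun u => g u • Set.indicator (Set.Ioi s) y u)
        = Set.indicator (Set.Ioi s) (fun u => g u * y u) := by
      funext u
      by_cases h : u ∈ Set.Ioi s
      · rw [Set.indicator_of_mem h, Set.indicator_of_mem h, smul_eq_mul]
      · rw [Set.indicator_of_notMem h, Set.indicator_of_notMem h, smul_eq_mul, mul_zero]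
    rw [h1, integral_indicator measurableSet_Ioi]
    -- support bound
    obtain ⟨R, hR⟩ := hgsupp.isBounded.subset_closedBall (0:ℝ)
    have hgz : ∀ u : ℝ, R < |u| → g u = 0 := by
      intro u hu
      apply image_eq_zero_of_notMem_tsupport
      intro hmem
      have := hR hmem
      rw [Metric.mem_closedBall, Real.dist_eq, sub_zero] at this
      linarith
    -- the function Ψ
    set Ψ : ℝ → ℝ := fun v => if 0 < v then g (-Real.log v) * v⁻¹ else 0 with hΨ
    have hgΨ : ∀ t : ℝ, g t = Real.exp (-t) * Ψ (Real.exp (-t)) := by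
      intro t
      rw [hΨ]
      simp only [if_pos (Real.exp_pos (-t)), Real.log_exp, neg_neg]
      rw [← mul_assoc, mul_comm (Real.exp (-t)) (g t), mul_assoc,
        mul_inv_cancel₀ (Real.exp_ne_zero _), mul_one]
    set b : ℝ := Real.exp (-s) with hb
    have hb0 : 0 < b := Real.exp_pos _
    -- continuity of Ψ on [0, b]
    have hΨc : ContinuousOn Ψ (Set.Icc 0 b) := by
      intro v hv
      rcases eq_or_lt_of_le hv.1 with h0 | h0
    
      · -- v = 0
        have hev : Ψ =ᶠ[nhds v] fun _ => 0 := by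
          refine Filter.eventuallyEq_of_mem
            (Iio_mem_nhds (show v < Real.exp (-(|R|+1)) from by
              rw [← h0]; exact Real.exp_pos _)) ?_
          intro w hw
          simp only [Set.mem_Iio] at hw
          rw [hΨ]
          by_cases hw0 : 0 < w
          · simp only [if_pos hw0]
            have hlog : Real.log w < -(|R|+1) := (Real.log_lt_iff_lt_exp hw0).mpr hw
            have hRlt : R < -Real.log w := by
              have := le_abs_self R
              linarith
            rw [hgz _ (lt_of_lt_of_le hRlt (le_abs_self _))]
            simp
          · simp only [if_neg hw0]
        have hca : ContinuousAt Ψ v := continuousAt_const.congr hev.symm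
        exact hca.continuousWithinAt
      · -- 0 < v
        have hcont : ContinuousAt (fun w : ℝ => g (-Real.log w) * w⁻¹) v := by
          have h5 : ContinuousAt Real.log v := Real.continuousAt_log (ne_of_gt h0)
          exact ((hgc.continuousAt.comp h5.neg).mul (continuousAt_id.inv₀ (ne_of_gt h0)))
        have hev : Ψ =ᶠ[nhds v] fun w => g (-Real.log w) * w⁻¹ := by
          refine Filter.eventuallyEq_of_mem (Ioi_mem_nhds h0) fun w hw => ?_
          rw [hΨ]
          simp only [if_pos (Set.mem_Ioi.mp hw)]
        exact (hcont.congr hev.symm).continuousWithinAt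
    -- L² facts
    have hyabs : MemLp (fun u : ℝ => |y u|) 2 (volume : Measure ℝ) := by
      simpa [Real.norm_eq_abs] using hy.norm
    have hC0int : IntegrableOn (fun u : ℝ => Real.exp (-(1 * u)) * |y u|) (Set.Ioi s)
        (volume : Measure ℝ) := integrableOn_exp_mul_L2 hyabs one_pos s
    set C0 : ℝ := ∫ u in Set.Ioi s, Real.exp (-(1 * u)) * |y u| with hC0def
    have hC0nonneg : 0 ≤ C0 := by
      rw [hC0def]
      refine integral_nonneg fun u => ?_
      positivity
    have hInt1 : IntegrableOn (fun u : ℝ => g u * y u) (Set.Ioi s) (volume : Measure ℝ) := by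
      have hgL2 : MemLp g 2 (volume : Measure ℝ) := hgc.memLp_of_hasCompactSupport hgsupp
      have h6 : MemLp (g • y) 1 ((volume : Measure ℝ).restrict (Set.Ioi s)) :=
        (hy.restrict (Set.Ioi s)).smul (hgL2.restrict _) (hpqr := ⟨by simp only [← one_div]; exact half_add_half.symm⟩)
      have h7 := memLp_one_iff_integrable.mp h6
      simpa [Pi.smul_apply', Pi.smul_apply, smul_eq_mul, Pi.mul_def, IntegrableOn] using h7
    have hbound : ∀ ε : ℝ, 0 < ε → |∫ u in Set.Ioi s, g u * y u| ≤ ε * (C0 + 1) := by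
      intro ε hε
      -- Weierstrass approximation
      obtain ⟨q, hq⟩ : ∃ q : Polynomial ℝ, ∀ v ∈ Set.Icc (0:ℝ) b, |Ψ v - q.eval v| ≤ ε := by
        set Φ : C(Set.Icc (0:ℝ) b, ℝ) := ⟨(Set.Icc (0:ℝ) b).restrict Ψ, hΨc.restrict⟩ with hΦ
        have hdense := polynomialFunctions_closure_eq_top (0:ℝ) b
        have hmem : Φ ∈ closure ((polynomialFunctions (Set.Icc (0:ℝ) b) :
            Subalgebra ℝ C(Set.Icc (0:ℝ) b, ℝ)) : Set C(Set.Icc (0:ℝ) b, ℝ)) := by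
          rw [← Subalgebra.topologicalClosure_coe, hdense]
          trivial
        obtain ⟨p, hpmem, hpd⟩ := Metric.mem_closure_iff.mp hmem ε hε
        rw [polynomialFunctions_coe] at hpmem
        obtain ⟨q, rfl⟩ := hpmem
        refine ⟨q, fun v hv => ?_⟩
        have h8 : dist (Φ ⟨v, hv⟩) ((Polynomial.toContinuousMapOnAlgHom (Set.Icc (0:ℝ) b) q)
            ⟨v, hv⟩) ≤ dist Φ (Polynomial.toContinuousMapOnAlgHom (Set.Icc (0:ℝ) b) q) :=
          ContinuousMap.dist_apply_le_dist _
        have h9 : dist (Ψ v) (q.eval v) ≤ ε := by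
          refine le_trans ?_ (le_of_lt hpd)
          refine le_trans (le_of_eq ?_) h8
          congr 1
        rw [Real.dist_eq] at h9
        exact h9
      -- the polynomial part integrates to zero
      have hIntTerm : ∀ i : ℕ, IntegrableOn
          (fun u : ℝ => q.coeff i * (Real.exp (-(((i:ℝ)+1) * u)) * y u)) (Set.Ioi s)
          (volume : Measure ℝ) := fun i =>
        (integrableOn_exp_mul_L2 hy (show (0:ℝ) < (i:ℝ)+1 by positivity) s).const_mul _
      have hq0 : ∀ u ∈ Set.Ioi s, Real.exp (-u) * q.eval (Real.exp (-u)) * y u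
          = ∑ i ∈ Finset.range (q.natDegree + 1),
            q.coeff i * (Real.exp (-(((i:ℝ)+1) * u)) * y u) := by
        intro u _
        rw [Polynomial.eval_eq_sum_range, Finset.mul_sum, Finset.sum_mul]
        refine Finset.sum_congr rfl fun i _ => ?_
        have h10 : Real.exp (-u) * (Real.exp (-u)) ^ i = Real.exp (-(((i:ℝ)+1) * u)) := by
          rw [← Real.exp_nat_mul, ← Real.exp_add]
          congr 1
          ring
        calc Real.exp (-u) * (q.coeff i * Real.exp (-u) ^ i) * y u
            = q.coeff i * ((Real.exp (-u) * Real.exp (-u) ^ i) * y u) := by ring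
          _ = q.coeff i * (Real.exp (-(((i:ℝ)+1) * u)) * y u) := by rw [h10]
      have hCzero : ∫ u in Set.Ioi s, Real.exp (-u) * q.eval (Real.exp (-u)) * y u = 0 := by
        rw [setIntegral_congr_fun measurableSet_Ioi hq0,
          integral_finset_sum _ (fun i _ => hIntTerm i)]
        refine Finset.sum_eq_zero fun i _ => ?_
        rw [integral_const_mul]
        have h11 := hkey ((i:ℝ)+1) (by positivity)
        rw [h11, mul_zero]
      have hIntC : IntegrableOn (fun u : ℝ => Real.exp (-u) * q.eval (Real.exp (-u)) * y u)
          (Set.Ioi s) (volume : Measure ℝ) := by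
        refine (integrable_finset_sum (Finset.range (q.natDegree + 1))
          (fun i _ => hIntTerm i)).congr ?_
        filter_upwards [ae_restrict_mem measurableSet_Ioi] with u hu
        exact (hq0 u hu).symm
      have hsplit : ∫ u in Set.Ioi s, g u * y u
          = (∫ u in Set.Ioi s, (g u - Real.exp (-u) * q.eval (Real.exp (-u))) * y u)
            + ∫ u in Set.Ioi s, Real.exp (-u) * q.eval (Real.exp (-u)) * y u := by
        rw [← integral_add ?_ hIntC]
        · refine integral_congr_ae (Filter.Eventually.of_forall fun u => ?_)
          show g u * y u = (g u - Real.exp (-u) * q.eval (Real.exp (-u))) * y u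
              + Real.exp (-u) * q.eval (Real.exp (-u)) * y u
          ring
        · refine (hInt1.sub hIntC).congr ?_
          refine Filter.Eventually.of_forall fun u => ?_
          show g u * y u - Real.exp (-u) * q.eval (Real.exp (-u)) * y u
              = (g u - Real.exp (-u) * q.eval (Real.exp (-u))) * y u
          ring
      rw [hsplit, hCzero, add_zero]
      have hnorm : ‖∫ u in Set.Ioi s, (g u - Real.exp (-u) * q.eval (Real.exp (-u))) * y u‖
          ≤ ∫ u in Set.Ioi s, ε * (Real.exp (-(1 * u)) * |y u|) := by
        refine norm_integral_le_of_norm_le (hC0int.const_mul ε) ?_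
        filter_upwards [ae_restrict_mem measurableSet_Ioi] with u hu
        have hu' : s < u := hu
        have hmem : Real.exp (-u) ∈ Set.Icc (0:ℝ) b := by
          constructor
          · exact (Real.exp_pos _).le
          · rw [hb]
            exact Real.exp_le_exp.mpr (by linarith)
        have h12 := hq _ hmem
        rw [hgΨ u]
        have h13 : Real.exp (-u) * Ψ (Real.exp (-u)) - Real.exp (-u) * q.eval (Real.exp (-u))
            = Real.exp (-u) * (Ψ (Real.exp (-u)) - q.eval (Real.exp (-u))) := by ring
        rw [h13, Real.norm_eq_abs, abs_mul, abs_mul, abs_of_pos (Real.exp_pos (-u))]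
        have h14 : Real.exp (-u) * |Ψ (Real.exp (-u)) - q.eval (Real.exp (-u))| * |y u|
            ≤ Real.exp (-u) * ε * |y u| :=
          mul_le_mul_of_nonneg_right
            (mul_le_mul_of_nonneg_left h12 (Real.exp_pos (-u)).le) (abs_nonneg (y u))
        refine le_trans h14 (le_of_eq ?_)
        rw [show -(1 * u) = -u from by ring]
        ring
      have hC0eq : ∫ u in Set.Ioi s, ε * (Real.exp (-(1 * u)) * |y u|) = ε * C0 := by
        rw [integral_const_mul, hC0def]
      rw [Real.norm_eq_abs] at hnorm
      rw [hC0eq] at hnorm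
      nlinarith
    by_contra hne
    have habs : 0 < |∫ u in Set.Ioi s, g u * y u| := abs_pos.mpr hne
    have h15 := hbound (|∫ u in Set.Ioi s, g u * y u| / (2 * (C0 + 1))) (by positivity)
    rw [div_mul_eq_mul_div, mul_comm] at h15
    have h16 : (C0 + 1) * |∫ u in Set.Ioi s, g u * y u| / (2 * (C0 + 1))
        = |∫ u in Set.Ioi s, g u * y u| / 2 := by
      rw [mul_comm (2:ℝ) (C0+1), ← div_div]
      congr 1
      rw [mul_comm, mul_div_assoc, div_self (by linarith : C0 + 1 ≠ 0), mul_one]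
    rw [h16] at h15
    linarith
  have h7 := ae_eq_zero_of_integral_contDiff_smul_eq_zero hli hmain
  filter_upwards [h7] with u hu humem
  rw [← Set.indicator_of_mem humem y]
  exact hu

end Helpers

/-- Proposition 1(1): if a class of real-valued `L²` processes is weakly `L²`-predictable,
then every process in the class is uniquely defined by its past `x|_{t ≤ s}`, for any `s`. -/
theorem weak_predictability_implies_past_determines (Xb : Set (ℝ → ℝ))
    (hL2 : ∀ x ∈ Xb, MemLp x 2 (volume : Measure ℝ))
    (hpred : WeakPredictableR Xb) (s : ℝ) (x x' : ℝ → ℝ) (hx : x ∈ Xb) (hx' : x' ∈ Xb)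
    (hpast : ∀ᵐ t : ℝ, t ≤ s → x t = x' t) :
    ∀ᵐ t : ℝ, x t = x' t := by
  have hy : MemLp (fun u : ℝ => x u - x' u) 2 (volume : Measure ℝ) :=
    (hL2 x hx).sub (hL2 x' hx')
  have hkey : ∀ c : ℝ, 0 < c →
      ∫ u in Set.Ioi s, Real.exp (-(c * u)) * (x u - x' u) = 0 :=
    fun c hc => keyA hL2 hpred hx hx' hpast hc
  have hB := keyB hy s hkey
  filter_upwards [hpast, hB] with t h1 h2
  by_cases ht : t ≤ s
  · exact h1 ht
  · have h3 := h2 (Set.mem_Ioi.mpr (lt_of_not_ge ht))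
    linarith
end
end

section
/- Let s ∈ ℝ and let f ∈ L²((s,+∞)) be such that ∫_s^∞ e^{−λ(t−s)} f(t) dt = 0 for every λ > 0 (these integrals converge absolutely since e^{−λ(t−s)} ∈ L²((s,+∞))). Then f = 0 almost everywhere on (s,+∞). -/
open MeasureTheory Filter Complex
open scoped ENNReal NNReal
set_option maxHeartbeats 1000000

private lemma exp_int_aux (s : ℝ) {c : ℝ} (hc : 0 < c) :
    IntegrableOn (fun t => Real.exp (-(c * (t - s)))) (Set.Ioi s) := by
  have h1 : IntegrableOn (fun t => Real.exp (c * s) * Real.exp (-c * t)) (Set.Ioi s) :=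
    (exp_neg_integrableOn_Ioi s hc).const_mul _
  have e : (fun t => Real.exp (-(c * (t - s)))) =
      fun t => Real.exp (c * s) * Real.exp (-c * t) := by
    funext t; rw [← Real.exp_add]; congr 1; ring
  rw [e]; exact h1

private lemma exp_memL2_aux (s : ℝ) {c : ℝ} (hc : 0 < c) :
    MemLp (fun t => Real.exp (-(c * (t - s)))) 2 (volume.restrict (Set.Ioi s)) := by
  have hm : AEStronglyMeasurable (fun t => Real.exp (-(c * (t - s))))
      (volume.restrict (Set.Ioi s)) :=
    (Real.continuous_exp.comp (by continuity)).aestronglyMeasurable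
  rw [memLp_two_iff_integrable_sq hm]
  have h2 : IntegrableOn (fun t => Real.exp (-((2 * c) * (t - s)))) (Set.Ioi s) :=
    exp_int_aux s (by linarith)
  have e : (fun t => Real.exp (-(c * (t - s))) ^ 2) =
      fun t => Real.exp (-((2 * c) * (t - s))) := by
    funext t; rw [sq, ← Real.exp_add]; congr 1; ring
  rw [e]; exact h2

/-- Completeness of the exponentials `{e^{-λ(t-s)} : λ > 0}` in `L²((s,∞))` (via the
Müntz–Szász theorem): if `f ∈ L²((s,∞))` is orthogonal to all of them, then `f = 0` a.e. -/
theorem exponentials_complete_L2 (s : ℝ) (f : ℝ → ℂ)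
    (hf : MemLp f 2 (volume.restrict (Set.Ioi s)))
    (h : ∀ lam : ℝ, 0 < lam →
      (∫ t in Set.Ioi s, (Real.exp (-(lam * (t - s))) : ℂ) * f t) = 0) :
    ∀ᵐ t ∂(volume.restrict (Set.Ioi s)), f t = 0 := by
  haveI : IsLocallyFiniteMeasure (volume.restrict (Set.Ioi s)) :=
    Measure.isLocallyFiniteMeasure_of_le Measure.restrict_le_self
  -- integrability of exponential times f
  have hint : ∀ c : ℝ, 0 < c →
      Integrable (fun t => Real.exp (-(c * (t - s))) • f t)
        (volume.restrict (Set.Ioi s)) := by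
    intro c hc
    have := hf.smul (exp_memL2_aux s hc) (r := 1)
    exact memLp_one_iff_integrable.1 this
  -- moments
  have hintn : ∀ n : ℕ,
      Integrable (fun t => (Real.exp (-(t - s)) ^ (n + 1)) • f t)
        (volume.restrict (Set.Ioi s)) := by
    intro n
    have hc : (0 : ℝ) < (n : ℝ) + 1 := by positivity
    have e : (fun t => (Real.exp (-(t - s)) ^ (n + 1)) • f t)
        = fun t => Real.exp (-(((n : ℝ) + 1) * (t - s))) • f t := by
      funext t; congr 1
      rw [← Real.exp_nat_mul]; congr 1; push_cast; ring
    rw [e]; exact hint _ hc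
  have hmom : ∀ n : ℕ,
      (∫ t in Set.Ioi s, (Real.exp (-(t - s)) ^ (n + 1)) • f t) = 0 := by
    intro n
    have hc : (0 : ℝ) < (n : ℝ) + 1 := by positivity
    have h0 := h ((n : ℝ) + 1) hc
    have e : (fun t => (Real.exp (-(t - s)) ^ (n + 1)) • f t)
        = fun t => (Real.exp (-(((n : ℝ) + 1) * (t - s))) : ℂ) * f t := by
      funext t
      have e1 : Real.exp (-(t - s)) ^ (n + 1)
          = Real.exp (-(((n : ℝ) + 1) * (t - s))) := by
        rw [← Real.exp_nat_mul]; congr 1; push_cast; ring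
      rw [e1, Complex.real_smul]
    rw [e]; exact h0
  -- polynomial moments
  have hpoly : ∀ p : Polynomial ℝ,
      Integrable (fun t => (Real.exp (-(t - s)) * p.eval (Real.exp (-(t - s)))) • f t)
        (volume.restrict (Set.Ioi s)) ∧
      (∫ t in Set.Ioi s,
        (Real.exp (-(t - s)) * p.eval (Real.exp (-(t - s)))) • f t) = 0 := by
    intro p
    induction p using Polynomial.induction_on' with
    | add p q hp hq =>
      have e : (fun t => (Real.exp (-(t - s)) * (p + q).eval (Real.exp (-(t - s)))) • f t)
          = fun t => (Real.exp (-(t - s)) * p.eval (Real.exp (-(t - s)))) • f t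
              + (Real.exp (-(t - s)) * q.eval (Real.exp (-(t - s)))) • f t := by
        funext t; rw [Polynomial.eval_add, mul_add, add_smul]
      refine ⟨by rw [e]; exact hp.1.add hq.1, ?_⟩
      rw [e, integral_add hp.1 hq.1, hp.2, hq.2, add_zero]
    | monomial n a =>
      have e : (fun t =>
            (Real.exp (-(t - s)) * (Polynomial.monomial n a).eval (Real.exp (-(t - s)))) • f t)
          = fun t => a • ((Real.exp (-(t - s)) ^ (n + 1)) • f t) := by
        funext t; rw [Polynomial.eval_monomial, smul_smul]; congr 1; ring
      refine ⟨by rw [e]; exact (hintn n).smul a, ?_⟩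
      rw [e, integral_smul, hmom n, smul_zero]
  -- locally integrable
  have hloc : LocallyIntegrable f (volume.restrict (Set.Ioi s)) :=
    hf.locallyIntegrable one_le_two
  apply ae_eq_zero_of_integral_contDiff_smul_eq_zero hloc
  intro g gsmooth gsupp
  -- g vanishes far to the right
  obtain ⟨R, hRs⟩ := gsupp.isBounded.subset_closedBall 0
  have hR : ∀ t : ℝ, R < t → g t = 0 := by
    intro t ht
    apply image_eq_zero_of_notMem_tsupport
    intro hmem
    have := hRs hmem
    rw [Metric.mem_closedBall, Real.dist_eq, sub_zero] at this
    have : t ≤ R := (abs_le.1 this).2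
    linarith
  -- the transferred function H
  set H : ℝ → ℝ := fun x => if 0 < x then g (s - Real.log x) * x⁻¹ else 0 with hHdef
  have hxH : ∀ t : ℝ, Real.exp (-(t - s)) * H (Real.exp (-(t - s))) = g t := by
    intro t
    have hx : (0 : ℝ) < Real.exp (-(t - s)) := Real.exp_pos _
    simp only [hHdef, if_pos hx, Real.log_exp]
    have harg : s - -(t - s) = t := by ring
    rw [harg, mul_comm (g t), ← mul_assoc, mul_inv_cancel₀ hx.ne', one_mul]
  have hδ : ∀ x : ℝ, x < Real.exp (s - R) → H x = 0 := by
    intro x hx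
    by_cases h0 : 0 < x
    · have hlog : Real.log x < s - R := (Real.log_lt_iff_lt_exp h0).2 hx
      have : R < s - Real.log x := by linarith
      simp only [hHdef, if_pos h0, hR _ this, zero_mul]
    · simp only [hHdef, if_neg h0]
  have Hcont : Continuous H := by
    rw [continuous_iff_continuousAt]
    intro x
    rcases lt_or_ge x (Real.exp (s - R)) with hx | hx
    · have heq : H =ᶠ[nhds x] fun _ => 0 := by
        filter_upwards [Iio_mem_nhds hx] with y hy using hδ y hy
      exact ContinuousAt.congr continuousAt_const heq.symm
    · have hx0 : (0 : ℝ) < x := lt_of_lt_of_le (Real.exp_pos _) hx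
      have heq : H =ᶠ[nhds x] fun y => g (s - Real.log y) * y⁻¹ := by
        filter_upwards [Ioi_mem_nhds hx0] with y hy
        simp only [Set.mem_Ioi] at hy
        simp only [hHdef, if_pos hy]
      refine ContinuousAt.congr ?_ heq.symm
      exact ((gsmooth.continuous.continuousAt).comp
        (continuousAt_const.sub (Real.continuousAt_log hx0.ne'))).mul
        (continuousAt_inv₀ hx0.ne')
  -- integrabilities and the constant C
  have hgf : Integrable (fun t => g t • f t) (volume.restrict (Set.Ioi s)) :=
    hloc.integrable_smul_left_of_hasCompactSupport gsmooth.continuous gsupp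
  have e1 : MemLp (fun t => Real.exp (-(t - s))) 2 (volume.restrict (Set.Ioi s)) := by
    have := exp_memL2_aux s one_pos
    simp only [one_mul] at this
    exact this
  have hCint : Integrable (fun t => Real.exp (-(t - s)) * ‖f t‖)
      (volume.restrict (Set.Ioi s)) := by
    have h2 := memLp_one_iff_integrable.1 (hf.norm.smul e1 (r := 1))
    simpa [Pi.smul_apply, smul_eq_mul, Pi.mul_def] using h2
  set C : ℝ := ∫ t in Set.Ioi s, Real.exp (-(t - s)) * ‖f t‖ with hCdef
  have hC0 : 0 ≤ C :=
    integral_nonneg fun t => mul_nonneg (Real.exp_pos _).le (norm_nonneg _)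
  -- key estimate
  have key : ∀ ε : ℝ, 0 < ε → ‖∫ t in Set.Ioi s, g t • f t‖ ≤ ε * C := by
    intro ε hε
    obtain ⟨p, hp⟩ := exists_polynomial_near_of_continuousOn 0 1 H Hcont.continuousOn ε hε
    obtain ⟨hpint, hpzero⟩ := hpoly p
    have hsub : (∫ t in Set.Ioi s, g t • f t)
        = ∫ t in Set.Ioi s,
            (g t - Real.exp (-(t - s)) * p.eval (Real.exp (-(t - s)))) • f t := by
      have e : (fun t => (g t - Real.exp (-(t - s)) * p.eval (Real.exp (-(t - s)))) • f t)
          = fun t => g t • f t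
              - (Real.exp (-(t - s)) * p.eval (Real.exp (-(t - s)))) • f t := by
        funext t; rw [sub_smul]
      rw [e, integral_sub hgf hpint, hpzero, sub_zero]
    rw [hsub]
    have hbint : Integrable (fun t => ε * (Real.exp (-(t - s)) * ‖f t‖))
        (volume.restrict (Set.Ioi s)) := hCint.const_mul ε
    have hbound : ∀ᵐ t ∂(volume.restrict (Set.Ioi s)),
        ‖(g t - Real.exp (-(t - s)) * p.eval (Real.exp (-(t - s)))) • f t‖
          ≤ ε * (Real.exp (-(t - s)) * ‖f t‖) := by
      filter_upwards [ae_restrict_mem measurableSet_Ioi] with t ht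
      have hx : (0 : ℝ) < Real.exp (-(t - s)) := Real.exp_pos _
      have hx1 : Real.exp (-(t - s)) ≤ 1 := by
        rw [← Real.exp_zero]
        exact Real.exp_le_exp.2 (by simp only [Set.mem_Ioi] at ht; linarith)
      have hmem : Real.exp (-(t - s)) ∈ Set.Icc (0 : ℝ) 1 := ⟨hx.le, hx1⟩
      have happ := hp _ hmem
      rw [norm_smul]
      have : ‖g t - Real.exp (-(t - s)) * p.eval (Real.exp (-(t - s)))‖
          ≤ ε * Real.exp (-(t - s)) := by
        rw [← hxH t, ← mul_sub, Real.norm_eq_abs, abs_mul, abs_of_pos hx]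
        rw [abs_sub_comm]
        calc Real.exp (-(t - s)) * |p.eval (Real.exp (-(t - s))) - H (Real.exp (-(t - s)))|
            ≤ Real.exp (-(t - s)) * ε := by
              exact mul_le_mul_of_nonneg_left happ.le hx.le
          _ = ε * Real.exp (-(t - s)) := by ring
      calc ‖g t - Real.exp (-(t - s)) * p.eval (Real.exp (-(t - s)))‖ * ‖f t‖
          ≤ (ε * Real.exp (-(t - s))) * ‖f t‖ :=
            mul_le_mul_of_nonneg_right this (norm_nonneg _)
        _ = ε * (Real.exp (-(t - s)) * ‖f t‖) := by ring
    have := norm_integral_le_of_norm_le hbint hbound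
    calc ‖∫ t in Set.Ioi s,
          (g t - Real.exp (-(t - s)) * p.eval (Real.exp (-(t - s)))) • f t‖
        ≤ ∫ t in Set.Ioi s, ε * (Real.exp (-(t - s)) * ‖f t‖) := this
      _ = ε * C := by rw [integral_const_mul]
  -- conclude
  have h0 : ‖∫ t in Set.Ioi s, g t • f t‖ ≤ 0 := by
    refine le_of_forall_pos_le_add fun η hη => ?_
    rw [zero_add]
    calc ‖∫ t in Set.Ioi s, g t • f t‖
        ≤ (η / (C + 1)) * C := key _ (by positivity)
      _ ≤ (η / (C + 1)) * (C + 1) :=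
          mul_le_mul_of_nonneg_left (by linarith) (by positivity)
      _ = η := div_mul_cancel₀ η (by positivity)
  exact norm_le_zero_iff.1 h0
end

section
/- Fix m > 0, a_1,…,a_m > 0, r > 0, γ > 0 and a complex polynomial d with deg d < m, and let K(z) = d(z)/∏_{j=1}^m (z − a_j). Then the function V is holomorphic and bounded on ℂ⁺ (i.e. V ∈ H^∞ of the half-plane), and K̂(z) = K(z)V(z) is holomorphic on ℂ⁺ (the poles of K at a_j being removable for K̂) with sup_{z∈ℂ⁺}|K̂(z)| < ∞ and sup_{s>0} ∫_ℝ |K̂(s+iω)|² dω < ∞ (i.e. K̂ ∈ H^∞ ∩ H² of the half-plane). -/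
open MeasureTheory Filter Complex
open scoped ENNReal NNReal

noncomputable section

set_option maxHeartbeats 1000000

lemma Vone_self (r γ a : ℝ) : Vone r γ a (a : ℂ) = 0 := by
  simp [Vone]

lemma denom_ne (r γ : ℝ) (hγ : 0 < γ) {z : ℂ} (hz : 0 ≤ z.re) :
    z + ((γ ^ (-r) : ℝ) : ℂ) ≠ 0 := by
  have hc : 0 < γ ^ (-r) := Real.rpow_pos_of_pos hγ _
  intro h
  have := congrArg Complex.re h
  simp [Complex.add_re] at this
  linarith

lemma vone_diffOn (r γ a : ℝ) (hγ : 0 < γ) :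
    DifferentiableOn ℂ (Vone r γ a) {z : ℂ | 0 < z.re} := by
  have h1 : DifferentiableOn ℂ (fun z : ℂ => (γ : ℂ) * (z - (a:ℂ))) {z : ℂ | 0 < z.re} :=
    ((differentiable_id.sub_const _).const_mul _).differentiableOn
  have h2 : DifferentiableOn ℂ (fun z : ℂ => z + ((γ ^ (-r) : ℝ) : ℂ)) {z : ℂ | 0 < z.re} :=
    (differentiable_id.add_const _).differentiableOn
  have h3 : DifferentiableOn ℂ
      (fun z : ℂ => (γ : ℂ) * (z - (a:ℂ)) / (z + ((γ ^ (-r) : ℝ) : ℂ))) {z : ℂ | 0 < z.re} :=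
    h1.div h2 (fun z hz => denom_ne r γ hγ (le_of_lt hz))
  exact (differentiableOn_const 1).sub h3.neg.cexp

private lemma re_u_ge (r γ a : ℝ) (hγ : 0 < γ) (ha : 0 < a) {z : ℂ} (hz : 0 < z.re) :
    -(γ * a / γ ^ (-r)) ≤ ((γ : ℂ) * (z - (a : ℂ)) / (z + ((γ ^ (-r) : ℝ) : ℂ))).re := by
  set c : ℝ := γ ^ (-r) with hc
  have hcpos : 0 < c := Real.rpow_pos_of_pos hγ _
  set w : ℂ := z + (c : ℂ) with hwdef
  have hw0 : w ≠ 0 := by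
    intro h
    have := congrArg Complex.re h
    simp [hwdef, Complex.add_re] at this
    linarith
  have hwre : w.re = z.re + c := by simp [hwdef]
  have key : (γ : ℂ) * (z - (a : ℂ)) / w = (γ : ℂ) - ((γ * (a + c) : ℝ) : ℂ) * w⁻¹ := by
    field_simp
    push_cast
    ring
  rw [key]
  have hre : (((γ * (a + c) : ℝ) : ℂ) * w⁻¹).re = (γ * (a + c)) * (w.re / Complex.normSq w) := by
    rw [Complex.re_ofReal_mul, Complex.inv_re]
  rw [Complex.sub_re, Complex.ofReal_re, hre]
  have hns : Complex.normSq w = w.re ^ 2 + w.im ^ 2 := by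
    rw [Complex.normSq_apply]; ring
  have hnspos : 0 < Complex.normSq w := Complex.normSq_pos.2 hw0
  have hfrac : w.re / Complex.normSq w ≤ 1 / c := by
    rw [div_le_div_iff₀ hnspos hcpos]
    nlinarith [sq_nonneg w.im, sq_nonneg (w.re - c)]
  have h2 : γ * (a + c) * (w.re / Complex.normSq w) ≤ γ * (a + c) * (1 / c) := by
    apply mul_le_mul_of_nonneg_left hfrac
    positivity
  have : γ * (a + c) * (1 / c) = γ + γ * a / c := by field_simp; ring
  linarith

lemma vone_norm_le (r γ a : ℝ) (hγ : 0 < γ) (ha : 0 < a) {z : ℂ} (hz : 0 < z.re) :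
    ‖Vone r γ a z‖ ≤ 1 + Real.exp (γ * a / γ ^ (-r)) := by
  unfold Vone
  refine (norm_sub_le _ _).trans ?_
  have h1 : ‖(1:ℂ)‖ = 1 := by simp
  rw [h1]
  gcongr
  rw [Complex.norm_exp]
  apply Real.exp_le_exp.2
  have := re_u_ge r γ a hγ ha hz
  simp only [Complex.neg_re]
  linarith

lemma isOpen_half : IsOpen {z : ℂ | 0 < z.re} := isOpen_lt continuous_const Complex.continuous_re

lemma dslope_ne_bound (r γ a : ℝ) (hγ : 0 < γ) (ha : 0 < a) {z : ℂ} (hz : 0 < z.re)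
    (hne : z ≠ (a : ℂ)) :
    ‖dslope (Vone r γ a) (a : ℂ) z‖
      ≤ (1 + Real.exp (γ * a / γ ^ (-r))) * γ / ‖z + ((γ ^ (-r) : ℝ) : ℂ)‖ := by
  set c : ℝ := γ ^ (-r) with hc
  have hcpos : 0 < c := Real.rpow_pos_of_pos hγ _
  set B : ℝ := 1 + Real.exp (γ * a / c) with hB
  have hB2 : 2 ≤ B := by
    have : (1:ℝ) ≤ Real.exp (γ * a / c) := Real.one_le_exp (by positivity)
    simp [hB]; linarith
  set t : ℝ := ‖z + (c : ℂ)‖ with ht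
  have htpos : 0 < t := by
    rw [ht, norm_pos_iff]
    exact denom_ne r γ hγ (le_of_lt hz)
  have hza : (0:ℝ) < ‖z - (a:ℂ)‖ := by
    rw [norm_pos_iff, sub_ne_zero]; exact hne
  rw [dslope_of_ne _ hne, slope_def_field, Vone_self, sub_zero]
  set u : ℂ := (γ : ℂ) * (z - (a : ℂ)) / (z + (c : ℂ)) with hu
  have hVz : Vone r γ a z = 1 - Complex.exp (-u) := rfl
  have hnu : ‖u‖ = γ * ‖z - (a:ℂ)‖ / t := by
    rw [hu, norm_div, norm_mul, Complex.norm_real, Real.norm_eq_abs, abs_of_pos hγ, ht]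
  rw [norm_div]
  by_cases hle : ‖u‖ ≤ 1
  · have h1 : ‖Vone r γ a z‖ ≤ 2 * ‖u‖ := by
      have : Vone r γ a z = -(Complex.exp (-u) - 1) := by rw [hVz]; ring
      rw [this, norm_neg]
      have := Complex.norm_exp_sub_one_le (x := -u) (by simpa using hle)
      simpa using this
    have h2 : ‖Vone r γ a z‖ / ‖z - (a:ℂ)‖ ≤ 2 * γ / t := by
      rw [div_le_div_iff₀ hza htpos]
      have := mul_le_mul_of_nonneg_right h1 (le_of_lt htpos)
      rw [hnu] at this
      calc ‖Vone r γ a z‖ * t ≤ 2 * (γ * ‖z - (a:ℂ)‖ / t) * t := this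
        _ = 2 * γ * ‖z - (a:ℂ)‖ := by field_simp
    refine h2.trans ?_
    gcongr
  · push_neg at hle
    have h1 : ‖Vone r γ a z‖ ≤ B := vone_norm_le r γ a hγ ha hz
    have h3 : t < γ * ‖z - (a:ℂ)‖ := by
      have h := hnu ▸ hle
      have := (lt_div_iff₀ htpos).1 h
      linarith
    rw [div_le_div_iff₀ hza htpos]
    have hBpos : 0 < B := by linarith
    calc ‖Vone r γ a z‖ * t ≤ B * (γ * ‖z - (a:ℂ)‖) := by
          apply mul_le_mul h1 (le_of_lt h3) (le_of_lt htpos) (le_of_lt hBpos)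
      _ = B * γ * ‖z - (a:ℂ)‖ := by ring

lemma dslope_bound (r γ a : ℝ) (hγ : 0 < γ) (ha : 0 < a) {z : ℂ} (hz : 0 < z.re) :
    ‖dslope (Vone r γ a) (a : ℂ) z‖
      ≤ (1 + Real.exp (γ * a / γ ^ (-r))) * γ / ‖z + ((γ ^ (-r) : ℝ) : ℂ)‖ := by
  by_cases hne : z ≠ (a : ℂ)
  · exact dslope_ne_bound r γ a hγ ha hz hne
  · push_neg at hne
    subst hne
    have hmem : {z : ℂ | 0 < z.re} ∈ nhds ((a:ℂ)) :=
      isOpen_half.mem_nhds (by simpa using ha)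
    have hdiff : DifferentiableAt ℂ (Vone r γ a) (a : ℂ) :=
      (vone_diffOn r γ a hγ).differentiableAt hmem
    have hcont : ContinuousAt (dslope (Vone r γ a) (a:ℂ)) (a:ℂ) :=
      continuousAt_dslope_same.2 hdiff
    have hT1 : Filter.Tendsto (fun z => ‖dslope (Vone r γ a) (a:ℂ) z‖) (nhdsWithin (a:ℂ) {(a:ℂ)}ᶜ)
        (nhds ‖dslope (Vone r γ a) (a:ℂ) (a:ℂ)‖) :=
      (hcont.norm.tendsto).mono_left nhdsWithin_le_nhds
    have hne2 : ((a:ℂ) + ((γ ^ (-r) : ℝ) : ℂ)) ≠ 0 :=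
      denom_ne r γ hγ (by simp; positivity)
    have hT2 : Filter.Tendsto
        (fun z : ℂ => (1 + Real.exp (γ * a / γ ^ (-r))) * γ / ‖z + ((γ ^ (-r) : ℝ) : ℂ)‖)
        (nhdsWithin (a:ℂ) {(a:ℂ)}ᶜ)
        (nhds ((1 + Real.exp (γ * a / γ ^ (-r))) * γ / ‖(a:ℂ) + ((γ ^ (-r) : ℝ) : ℂ)‖)) := by
      apply Filter.Tendsto.mono_left _ nhdsWithin_le_nhds
      apply Filter.Tendsto.div tendsto_const_nhds
      · exact ((continuous_id.add continuous_const).norm.tendsto _)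
      · simpa [norm_ne_zero_iff] using hne2
    refine le_of_tendsto_of_tendsto hT1 hT2 ?_
    have hev1 : ∀ᶠ w in nhdsWithin (a:ℂ) {(a:ℂ)}ᶜ, 0 < w.re :=
      Filter.eventually_iff_exists_mem.2 ⟨{z : ℂ | 0 < z.re} ∩ {(a:ℂ)}ᶜ,
        Filter.inter_mem (nhdsWithin_le_nhds hmem) self_mem_nhdsWithin, fun w hw => hw.1⟩
    have hev2 : ∀ᶠ w in nhdsWithin (a:ℂ) {(a:ℂ)}ᶜ, w ≠ (a:ℂ) :=
      eventually_mem_nhdsWithin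
    filter_upwards [hev1, hev2] with w h1 h2
    exact dslope_ne_bound r γ a hγ ha h1 h2

lemma poly_bound (m : ℕ) (hm : 0 < m) (d : Polynomial ℂ) (hd : d.degree < (m : WithBot ℕ))
    (z : ℂ) :
    ‖Polynomial.eval z d‖ ≤ (∑ i ∈ Finset.range m, ‖d.coeff i‖) * max 1 ‖z‖ ^ (m - 1) := by
  have hnd : d.natDegree < m := by
    rcases eq_or_ne d 0 with h | h
    · simpa [h] using hm
    · exact (Polynomial.natDegree_lt_iff_degree_lt h).2 (by exact_mod_cast hd)
  rw [Polynomial.eval_eq_sum_range' hnd]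
  refine (norm_sum_le _ _).trans ?_
  rw [Finset.sum_mul]
  apply Finset.sum_le_sum
  intro i hi
  rw [norm_mul, norm_pow]
  apply mul_le_mul_of_nonneg_left _ (norm_nonneg _)
  calc ‖z‖ ^ i ≤ max 1 ‖z‖ ^ i := by
        apply pow_le_pow_left₀ (norm_nonneg _) (le_max_right _ _)
    _ ≤ max 1 ‖z‖ ^ (m - 1) := by
        apply pow_le_pow_right₀ (le_max_left _ _)
        have := Finset.mem_range.1 hi
        omega

lemma norm_le_shift {c : ℝ} (hc : 0 < c) {z : ℂ} (hz : 0 ≤ z.re) : ‖z‖ ≤ ‖z + (c:ℂ)‖ := by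
  have h1 : Complex.normSq z ≤ Complex.normSq (z + (c:ℂ)) := by
    simp only [Complex.normSq_apply, Complex.add_re, Complex.add_im, Complex.ofReal_re,
      Complex.ofReal_im, add_zero]
    nlinarith
  calc ‖z‖ = Real.sqrt (Complex.normSq z) := by rw [Complex.norm_def]
    _ ≤ Real.sqrt (Complex.normSq (z + (c:ℂ))) := Real.sqrt_le_sqrt h1
    _ = ‖z + (c:ℂ)‖ := by rw [Complex.norm_def]

lemma c_le_shift {c : ℝ} (hc : 0 < c) {z : ℂ} (hz : 0 ≤ z.re) : c ≤ ‖z + (c:ℂ)‖ := by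
  have : (z + (c:ℂ)).re ≤ ‖z + (c:ℂ)‖ := Complex.re_le_norm _
  simp only [Complex.add_re, Complex.ofReal_re] at this
  linarith

lemma max_le_shift {c : ℝ} (hc : 0 < c) {z : ℂ} (hz : 0 ≤ z.re) :
    max 1 ‖z‖ ≤ max 1 c⁻¹ * ‖z + (c:ℂ)‖ := by
  have ht := c_le_shift hc hz
  have htpos : 0 < ‖z + (c:ℂ)‖ := lt_of_lt_of_le hc ht
  apply max_le
  · calc (1:ℝ) = c⁻¹ * c := by field_simp
      _ ≤ c⁻¹ * ‖z + (c:ℂ)‖ := by gcongr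
      _ ≤ max 1 c⁻¹ * ‖z + (c:ℂ)‖ := by gcongr; exact le_max_right _ _
  · calc ‖z‖ ≤ ‖z + (c:ℂ)‖ := norm_le_shift hc hz
      _ ≤ max 1 c⁻¹ * ‖z + (c:ℂ)‖ := by
          nth_rewrite 1 [← one_mul ‖z + (c:ℂ)‖]
          gcongr
          exact le_max_left _ _

/-- Lemma 1(i): `V ∈ H^∞(ℂ⁺)` and `K̂ = K·V` extends to a function in `H^∞ ∩ H²` of the
half-plane `ℂ⁺` (the poles of `K` at the `a_j` being removable). -/
theorem V_Hinfty_and_KV_Hinfty_H2 (m : ℕ) (hm : 0 < m) (a : Fin m → ℝ) (ha : ∀ j, 0 < a j)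
    (r γ : ℝ) (hr : 0 < r) (hγ : 0 < γ) (d : Polynomial ℂ) (hd : d.degree < (m : WithBot ℕ)) :
    (DifferentiableOn ℂ (Vfun m a r γ) {z : ℂ | 0 < z.re} ∧
      ∃ M : ℝ, ∀ z : ℂ, 0 < z.re → ‖Vfun m a r γ z‖ ≤ M) ∧
    ∃ G : ℂ → ℂ,
      DifferentiableOn ℂ G {z : ℂ | 0 < z.re} ∧
      (∀ z : ℂ, 0 < z.re → (∀ j, z ≠ (a j : ℂ)) →
        G z = (Polynomial.eval z d / ∏ j, (z - (a j : ℂ))) * Vfun m a r γ z) ∧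
      (∃ M : ℝ, ∀ z : ℂ, 0 < z.re → ‖G z‖ ≤ M) ∧
      (∃ C : ℝ, ∀ s : ℝ, 0 < s → (∫ ω : ℝ, ‖G (s + Complex.I * ω)‖ ^ 2) ≤ C) := by
  obtain ⟨c, hcdef⟩ : ∃ c : ℝ, c = γ ^ (-r) := ⟨_, rfl⟩
  have hc : 0 < c := hcdef ▸ Real.rpow_pos_of_pos hγ _
  obtain ⟨B, hBdef⟩ : ∃ B : Fin m → ℝ, B = fun j => 1 + Real.exp (γ * a j / c) := ⟨_, rfl⟩
  have hBpos : ∀ j, 0 < B j := fun j => by rw [hBdef]; positivity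
  obtain ⟨P, hPdef⟩ : ∃ P : ℝ, P = ∏ j, B j := ⟨_, rfl⟩
  have hPpos : 0 < P := hPdef ▸ Finset.prod_pos fun j _ => hBpos j
  obtain ⟨S, hSdef⟩ : ∃ S : ℝ, S = ∑ i ∈ Finset.range m, ‖d.coeff i‖ := ⟨_, rfl⟩
  have hS : 0 ≤ S := hSdef ▸ Finset.sum_nonneg fun i _ => norm_nonneg _
  obtain ⟨E, hEdef⟩ : ∃ E : ℝ, E = max 1 c⁻¹ := ⟨_, rfl⟩
  have hE : (1:ℝ) ≤ E := hEdef ▸ le_max_left _ _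
  obtain ⟨K, hKdef⟩ : ∃ K : ℝ, K = S * E ^ (m - 1) * (P * γ ^ m) := ⟨_, rfl⟩
  have hK : 0 ≤ K := by
    rw [hKdef]
    have h1 : (0:ℝ) ≤ E ^ (m-1) := pow_nonneg (by linarith) _
    have h2 : (0:ℝ) ≤ P * γ ^ m := by positivity
    exact mul_nonneg (mul_nonneg hS h1) h2
  have hmem : ∀ j : Fin m, {z : ℂ | 0 < z.re} ∈ nhds ((a j : ℂ)) := fun j =>
    isOpen_half.mem_nhds (by simpa using ha j)
  -- part 1: Vfun
  have hVdiff : DifferentiableOn ℂ (Vfun m a r γ) {z : ℂ | 0 < z.re} := by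
    apply DifferentiableOn.fun_finset_prod
    exact fun j _ => vone_diffOn r γ (a j) hγ
  have hVbd : ∀ z : ℂ, 0 < z.re → ‖Vfun m a r γ z‖ ≤ P := by
    intro z hz
    rw [Vfun, norm_prod, hPdef, hBdef]
    refine Finset.prod_le_prod (fun j _ => norm_nonneg _) (fun j _ => ?_)
    rw [hcdef]
    exact vone_norm_le r γ (a j) hγ (ha j) hz
  refine ⟨⟨hVdiff, P, hVbd⟩, ?_⟩
  -- the function G
  obtain ⟨G, hGdef⟩ : ∃ G : ℂ → ℂ, G = fun z =>
      Polynomial.eval z d * ∏ j, dslope (Vone r γ (a j)) ((a j : ℂ)) z := ⟨_, rfl⟩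
  have hGdiff : DifferentiableOn ℂ G {z : ℂ | 0 < z.re} := by
    rw [hGdef]
    apply DifferentiableOn.mul (Polynomial.differentiable d).differentiableOn
    apply DifferentiableOn.fun_finset_prod
    intro j _
    exact (Complex.differentiableOn_dslope (hmem j)).2 (vone_diffOn r γ (a j) hγ)
  -- key pointwise bound
  have key : ∀ z : ℂ, 0 < z.re → ‖G z‖ ≤ K / ‖z + (c:ℂ)‖ := by
    intro z hz
    obtain ⟨t, htdef⟩ : ∃ t : ℝ, t = ‖z + (c:ℂ)‖ := ⟨_, rfl⟩
    rw [← htdef]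
    have hct : c ≤ t := htdef ▸ c_le_shift hc (le_of_lt hz)
    have htpos : 0 < t := lt_of_lt_of_le hc hct
    have h1 : ‖Polynomial.eval z d‖ ≤ S * (E * t) ^ (m - 1) := by
      refine (poly_bound m hm d hd z).trans ?_
      rw [hSdef]
      have hmx : max 1 ‖z‖ ^ (m - 1) ≤ (E * t) ^ (m - 1) := by
        apply pow_le_pow_left₀ (le_trans zero_le_one (le_max_left _ _))
        rw [hEdef, htdef]
        exact max_le_shift hc (le_of_lt hz)
      exact mul_le_mul_of_nonneg_left hmx (hSdef ▸ hS)
    have h2 : ‖∏ j, dslope (Vone r γ (a j)) ((a j : ℂ)) z‖ ≤ P * γ ^ m / t ^ m := by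
      rw [norm_prod]
      have hj : ∀ j : Fin m, j ∈ Finset.univ →
          ‖dslope (Vone r γ (a j)) ((a j : ℂ)) z‖ ≤ B j * γ / t := by
        intro j _
        rw [hBdef, htdef, hcdef]
        exact dslope_bound r γ (a j) hγ (ha j) hz
      refine (Finset.prod_le_prod (fun j _ => norm_nonneg _) hj).trans ?_
      rw [Finset.prod_div_distrib, Finset.prod_mul_distrib, Finset.prod_const,
        Finset.prod_const, hPdef]
      simp [Finset.card_univ]
    have h3 : ‖G z‖ ≤ (S * (E * t) ^ (m - 1)) * (P * γ ^ m / t ^ m) := by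
      rw [hGdef]
      simp only [norm_mul]
      have hnn1 : (0:ℝ) ≤ S * (E * t) ^ (m - 1) :=
        mul_nonneg hS (pow_nonneg (by nlinarith) _)
      exact mul_le_mul h1 h2 (norm_nonneg _) hnn1
    refine h3.trans (le_of_eq ?_)
    have htm : t ^ m = t ^ (m - 1) * t := by
      rw [← pow_succ]
      congr 1
      omega
    rw [mul_pow, htm, hKdef]
    field_simp
  -- sup bound
  have hsup : ∀ z : ℂ, 0 < z.re → ‖G z‖ ≤ K / c := by
    intro z hz
    refine (key z hz).trans ?_
    exact div_le_div_of_nonneg_left hK hc (c_le_shift hc (le_of_lt hz))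
  -- equality
  have heq : ∀ z : ℂ, 0 < z.re → (∀ j, z ≠ (a j : ℂ)) →
      G z = (Polynomial.eval z d / ∏ j, (z - (a j : ℂ))) * Vfun m a r γ z := by
    intro z hz hne
    have hdsl : ∀ j : Fin m, dslope (Vone r γ (a j)) ((a j : ℂ)) z
        = Vone r γ (a j) z / (z - (a j : ℂ)) := by
      intro j
      rw [dslope_of_ne _ (hne j), slope_def_field, Vone_self, sub_zero]
    rw [hGdef]
    simp only []
    rw [Finset.prod_congr rfl (fun j _ => hdsl j), Finset.prod_div_distrib, Vfun]
    ring
  refine ⟨G, hGdiff, heq, ⟨K / c, hsup⟩, ?_⟩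
  -- L² bound
  obtain ⟨A, hAdef⟩ : ∃ A : ℝ, A = max 1 (c ^ 2)⁻¹ := ⟨_, rfl⟩
  have hA1 : (1:ℝ) ≤ A := hAdef ▸ le_max_left _ _
  have hA2 : (c ^ 2)⁻¹ ≤ A := hAdef ▸ le_max_right _ _
  have hAc : (1:ℝ) ≤ A * c ^ 2 := by
    have h := mul_le_mul_of_nonneg_right hA2 (sq_nonneg c)
    rwa [inv_mul_cancel₀ (by positivity)] at h
  refine ⟨K ^ 2 * A * Real.pi, ?_⟩
  intro s hs
  have hb : ∀ ω : ℝ, ‖G ((s:ℂ) + Complex.I * ω)‖ ^ 2 ≤ K ^ 2 * A * (1 + ω ^ 2)⁻¹ := by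
    intro ω
    obtain ⟨z, hzdef⟩ : ∃ z : ℂ, z = (s:ℂ) + Complex.I * ω := ⟨_, rfl⟩
    rw [← hzdef]
    have hz : 0 < z.re := by rw [hzdef]; simp; exact hs
    obtain ⟨t, htdef⟩ : ∃ t : ℝ, t = ‖z + (c:ℂ)‖ := ⟨_, rfl⟩
    have hct : c ≤ t := htdef ▸ c_le_shift hc (le_of_lt hz)
    have htpos : 0 < t := lt_of_lt_of_le hc hct
    have ht2 : t ^ 2 = (s + c) ^ 2 + ω ^ 2 := by
      rw [htdef, hzdef, Complex.sq_norm, Complex.normSq_apply]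
      simp [Complex.add_re, Complex.add_im, Complex.mul_re, Complex.mul_im]
      ring
    have h1 : ‖G z‖ ^ 2 ≤ K ^ 2 / t ^ 2 := by
      rw [← div_pow]
      have := key z hz
      rw [← htdef] at this
      exact pow_le_pow_left₀ (norm_nonneg _) this 2
    have h2 : K ^ 2 / t ^ 2 ≤ K ^ 2 / (c ^ 2 + ω ^ 2) := by
      apply div_le_div_of_nonneg_left (by positivity)
      · positivity
      · rw [ht2]; nlinarith [sq_nonneg ω]
    have h3 : K ^ 2 / (c ^ 2 + ω ^ 2) ≤ K ^ 2 * A * (1 + ω ^ 2)⁻¹ := by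
      rw [← div_eq_mul_inv, div_le_div_iff₀ (by positivity) (by positivity)]
      have h4 : 1 + ω ^ 2 ≤ A * (c ^ 2 + ω ^ 2) := by nlinarith [sq_nonneg ω]
      calc K ^ 2 * (1 + ω ^ 2) ≤ K ^ 2 * (A * (c ^ 2 + ω ^ 2)) :=
            mul_le_mul_of_nonneg_left h4 (sq_nonneg K)
        _ = K ^ 2 * A * (c ^ 2 + ω ^ 2) := by ring
    exact (h1.trans h2).trans h3
  calc (∫ ω : ℝ, ‖G ((s:ℂ) + Complex.I * ω)‖ ^ 2)
      ≤ ∫ ω : ℝ, K ^ 2 * A * (1 + ω ^ 2)⁻¹ := by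
        apply integral_mono_of_nonneg
        · exact Filter.Eventually.of_forall fun ω => by positivity
        · exact (integrable_inv_one_add_sq).const_mul _
        · exact Filter.Eventually.of_forall hb
    _ = K ^ 2 * A * Real.pi := by
        rw [MeasureTheory.integral_const_mul, integral_univ_inv_one_add_sq]
    _ ≤ K ^ 2 * A * Real.pi := le_refl _
end
end
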